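/- arXiv:1803.08352 — 2 statements merged into one kernel-verified Lean document; each statement's English description precedes it below -/
import Mathlib

section
/- If a probability measure ν on X is a weak-* limit of a sequence of Borel probability measures (μ_k), and if there exist ε > 0, s ≥ 0, K > 0, and N ∈ ℕ such that limsup_{k→∞} μ_k(B_n(x,ε)) ≤ K·exp(−s n) for every Bowen ball B_n(x,ε) with n ≥ N intersecting a Borel set Z, and ν(Z) > 0, then the Bowen topological entropy of Z at scale ε satisfies h_top^B(Z,ε) ≥ s. -/
open Filter Topology MeasureTheory Set
open scoped ENNReal NNReal

variable {X : Type*}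

/-- The (open) Bowen ball of order `n` and radius `ε` centred at `x`. -/
def bowenBall [PseudoMetricSpace X] (T : X → X) (n : ℕ) (x : X) (ε : ℝ) : Set X :=
  {y | ∀ i < n, dist (T^[i] x) (T^[i] y) < ε}

/-- The closed Bowen ball of order `n` and radius `ε` centred at `x`. -/
def closedBowenBall [PseudoMetricSpace X] (T : X → X) (n : ℕ) (x : X) (ε : ℝ) : Set X :=
  {y | ∀ i < n, dist (T^[i] x) (T^[i] y) ≤ ε}

/-- Generalized Bowen ball `B(c 0, …, c (n-1); ε)`. -/
def genBall [PseudoMetricSpace X] (T : X → X) (n : ℕ) (c : ℕ → X) (ε : ℝ) : Set X :=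
  {y | ∀ i < n, dist (T^[i] y) (c i) < ε}

/-- Pesin–Pitskel outer quantity `M(φ, Z, s, ε, N)` via covers by Bowen balls. -/
noncomputable def ppM [PseudoMetricSpace X] (T : X → X) (φ : X → ℝ) (Z : Set X)
    (s ε : ℝ) (N : ℕ) : ℝ≥0∞ :=
  ⨅ (c : ℕ → X) (n : ℕ → ℕ) (_ : ∀ i, N ≤ n i)
    (_ : Z ⊆ ⋃ i, bowenBall T (n i) (c i) ε),
    ∑' i, ENNReal.ofReal
      (Real.exp (-s * n i +
        sSup ((fun y => birkhoffSum T φ (n i) y) '' bowenBall T (n i) (c i) ε)))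

/-- `M(φ, Z, s, ε) = lim_{N → ∞} M(φ, Z, s, ε, N)` (the quantity is nondecreasing in `N`). -/
noncomputable def ppMLim [PseudoMetricSpace X] (T : X → X) (φ : X → ℝ) (Z : Set X)
    (s ε : ℝ) : ℝ≥0∞ :=
  ⨆ N : ℕ, ppM T φ Z s ε N

/-- Pesin–Pitskel topological pressure of `φ` on `Z` at scale `ε`: critical value of `s`. -/
noncomputable def ppPressureAt [PseudoMetricSpace X] (T : X → X) (φ : X → ℝ) (Z : Set X)
    (ε : ℝ) : ℝ :=
  sInf {s : ℝ | ppMLim T φ Z s ε = 0}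

/-- Pesin–Pitskel topological pressure of `φ` on `Z`: `lim_{ε → 0}` (equivalently, `sup` over
`ε > 0`, by monotonicity) of the pressure at scale `ε`. -/
noncomputable def ppPressure [PseudoMetricSpace X] (T : X → X) (φ : X → ℝ) (Z : Set X) : ℝ :=
  ⨆ (ε : ℝ) (_ : 0 < ε), ppPressureAt T φ Z ε

/-- Bowen topological entropy of `Z` at scale `ε`. -/
noncomputable def bowenEntropyAt [PseudoMetricSpace X] (T : X → X) (Z : Set X) (ε : ℝ) : ℝ :=
  ppPressureAt T (fun _ => 0) Z ε

/-- Bowen (Pesin–Pitskel) topological entropy of an arbitrary subset `Z`. -/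
noncomputable def bowenEntropy [PseudoMetricSpace X] (T : X → X) (Z : Set X) : ℝ :=
  ppPressure T (fun _ => 0) Z

/-- `F` is an `(n, ε)`-spanning set for `Z`. -/
def IsSpanningSet [PseudoMetricSpace X] (T : X → X) (n : ℕ) (ε : ℝ) (F : Finset X)
    (Z : Set X) : Prop :=
  Z ⊆ ⋃ x ∈ F, bowenBall T n x ε

/-- `E` is an `(n, ε)`-separated set (distinct points are `ε`-apart in the Bowen metric `d_n`). -/
def IsSeparatedSet [PseudoMetricSpace X] (T : X → X) (n : ℕ) (ε : ℝ) (E : Finset X) : Prop :=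
  ∀ x ∈ E, ∀ y ∈ E, x ≠ y → ∃ i < n, ε ≤ dist (T^[i] x) (T^[i] y)

/-- `Q_n(T, φ, ε)`: classical pressure partition function over spanning sets. -/
noncomputable def classQ [PseudoMetricSpace X] (T : X → X) (φ : X → ℝ) (n : ℕ) (ε : ℝ) : ℝ :=
  sInf {q : ℝ | ∃ F : Finset X, IsSpanningSet T n ε F Set.univ ∧
    q = ∑ x ∈ F, Real.exp (sInf ((fun y => birkhoffSum T φ n y) '' bowenBall T n x ε))}

/-- Classical topological pressure `P(φ)`. -/
noncomputable def classPressure [PseudoMetricSpace X] (T : X → X) (φ : X → ℝ) : ℝ :=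
  ⨆ (ε : ℝ) (_ : 0 < ε), Filter.atTop.limsup (fun n : ℕ => Real.log (classQ T φ n ε) / n)

/-- Classical topological entropy `h_top(T) = P(0)`. -/
noncomputable def topEntropy [PseudoMetricSpace X] (T : X → X) : ℝ :=
  classPressure T (fun _ => 0)

/-- Entropy of the refined partition `⋁_{i<n} T^{-i} P` with respect to `μ`. -/
noncomputable def joinEntropy [MeasurableSpace X] (μ : Measure X) (T : X → X)
    (P : Finset (Set X)) (n : ℕ) : ℝ :=
  letI := Classical.decEq (Set X)
  ∑ A ∈ (Finset.univ : Finset (Fin n → {A // A ∈ P})).image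
      (fun f => ⋂ i : Fin n, T^[(i : ℕ)] ⁻¹' ((f i : Set X))),
    Real.negMulLog (μ A).toReal

/-- A finite measurable partition of `X`. -/
def IsMeasPartition [MeasurableSpace X] (P : Finset (Set X)) : Prop :=
  (∀ A ∈ P, MeasurableSet A) ∧ (⋃ A ∈ P, A) = Set.univ ∧
    ∀ A ∈ P, ∀ B ∈ P, A ≠ B → A ∩ B = ∅

/-- Kolmogorov–Sinai (measure-theoretic) entropy `h_μ(T)`. -/
noncomputable def ksEntropy [MeasurableSpace X] (μ : Measure X) (T : X → X) : ℝ :=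
  sSup {h : ℝ | ∃ P : Finset (Set X), IsMeasPartition P ∧
    h = Filter.atTop.liminf (fun n : ℕ => joinEntropy μ T P n / n)}

/-- `m` is a specification constant for `T` at scale `ε`. -/
def SpecAt [PseudoMetricSpace X] (T : X → X) (ε : ℝ) (m : ℕ) : Prop :=
  ∀ k : ℕ, ∀ a b : ℕ → ℕ,
    (∀ j < k, a j ≤ b j) →
    (∀ j, j + 1 < k → b j + m ≤ a (j + 1)) →
    ∀ x : ℕ → X, ∃ y : X, ∀ j < k, ∀ p ≤ b j - a j,
      dist (T^[p + a j] y) (T^[p] (x j)) < ε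

/-- The specification property. -/
def Specification [PseudoMetricSpace X] (T : X → X) : Prop :=
  ∀ ε : ℝ, 0 < ε → ∃ m : ℕ, SpecAt T ε m

/-- `max {t : ℕ | T^[n] x ∈ B_t(x₀, ε)}`, the shadowing time. -/
noncomputable def shadowTime [PseudoMetricSpace X] (T : X → X) (x₀ : X) (ε : ℝ) (n : ℕ)
    (x : X) : ℕ :=
  sSup {t : ℕ | T^[n] x ∈ bowenBall T t x₀ ε}

/-- The set `D^{x₀}_f`. Since the inner quantity is monotone in `ε`, the condition
`lim_{ε→0} limsup_n (…) ≥ 0` is equivalent to: for every `ε > 0` the limsup is `≥ 0`. -/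
def Dset [PseudoMetricSpace X] (T : X → X) (x₀ : X) (f : X → ℝ) : Set X :=
  {x | ∀ ε > 0, 0 ≤ Filter.atTop.limsup
      (fun n : ℕ => ((shadowTime T x₀ ε n x : ℝ) - birkhoffSum T f n x) / n)}

/-- The set `D^{x₀}_α`. -/
def Dalpha [PseudoMetricSpace X] (T : X → X) (x₀ : X) (α : ℝ) : Set X :=
  {x | ∀ ε > 0, α ≤ Filter.atTop.limsup
      (fun n : ℕ => (shadowTime T x₀ ε n x : ℝ) / n)}

lemma isOpen_bowenBall' [MetricSpace X] {T : X → X} (hT : Continuous T)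
    (n : ℕ) (x : X) (ε : ℝ) : IsOpen (bowenBall T n x ε) := by
  have h : bowenBall T n x ε = ⋂ i ∈ Finset.range n, {y | dist (T^[i] x) (T^[i] y) < ε} := by
    ext y; simp [bowenBall]
  rw [h]
  exact isOpen_biInter_finset fun i _ =>
    isOpen_lt (continuous_const.dist (hT.iterate i)) continuous_const

lemma sSup_birkhoff_zero' [MetricSpace X] (T : X → X) (n : ℕ) (B : Set X) :
    sSup ((fun y => birkhoffSum T (fun _ : X => (0:ℝ)) n y) '' B) = 0 := by
  have h0 : (fun y : X => birkhoffSum T (fun _ : X => (0:ℝ)) n y) = fun _ => 0 := by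
    funext y; simp [birkhoffSum]
  rw [h0]
  rcases B.eq_empty_or_nonempty with h | h
  · simp [h]
  · rw [h.image_const]; exact csSup_singleton 0

lemma exists_ppMLim_zero [MetricSpace X] [CompactSpace X] [Nonempty X]
    {T : X → X} (Z : Set X) {ε : ℝ} (hε : 0 < ε) :
    ∃ s₀ : ℝ, ppMLim T (fun _ => 0) Z s₀ ε = 0 := by
  classical
  -- finite ε/2-cover
  obtain ⟨t, ht⟩ : ∃ t : Finset X, (Set.univ : Set X) ⊆ ⋃ x ∈ t, Metric.ball x (ε/2) := by
    rcases isCompact_univ.elim_finite_subcover (fun x : X => Metric.ball x (ε/2))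
      (fun _ => Metric.isOpen_ball)
      (fun x _ => Set.mem_iUnion.mpr ⟨x, Metric.mem_ball_self (by linarith)⟩) with ⟨t, ht⟩
    exact ⟨t, ht⟩
  have hσex : ∀ z : X, ∃ c, c ∈ t ∧ dist c z < ε/2 := by
    intro z
    have hz := ht (Set.mem_univ z)
    simp only [Set.mem_iUnion, Metric.mem_ball] at hz
    obtain ⟨c, hc, hcz⟩ := hz
    exact ⟨c, hc, by rwa [dist_comm]⟩
  choose σ hσt hσd using hσex
  have htne : t.Nonempty := by
    obtain ⟨x⟩ := ‹Nonempty X›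
    exact ⟨σ x, hσt x⟩
  set m : ℕ := t.card with hm
  have hm1 : 1 ≤ m := Finset.card_pos.mpr htne
  set s₀ : ℝ := Real.log m + 1 with hs₀
  have hlogm : 0 ≤ Real.log m := Real.log_nonneg (by exact_mod_cast hm1)
  have hs₀1 : 1 ≤ s₀ := by linarith
  refine ⟨s₀, ?_⟩
  rw [ppMLim, ENNReal.iSup_eq_zero]
  intro N₀
  -- bound: for every n₀ ≥ N₀, ppM ≤ ofReal (exp (-n₀)) * C'
  set r : ℝ≥0∞ := ENNReal.ofReal (Real.exp (-s₀)) with hr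
  have hrlt : r < 1 := by
    rw [hr, ← ENNReal.ofReal_one]
    exact ENNReal.ofReal_lt_ofReal_iff_of_nonneg (Real.exp_nonneg _) |>.mpr
      (Real.exp_lt_one_iff.mpr (by linarith))
  set C' : ℝ≥0∞ := 1 + (1 - r)⁻¹ with hC'
  have hC't : C' ≠ ⊤ := by
    have h1 : (1 : ℝ≥0∞) - r ≠ 0 := by
      simp only [ne_eq, tsub_eq_zero_iff_le, not_le]; exact hrlt
    exact ENNReal.add_ne_top.mpr ⟨ENNReal.one_ne_top, ENNReal.inv_ne_top.mpr h1⟩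
  have hbd : ∀ n₀ : ℕ, N₀ ≤ n₀ →
      ppM T (fun _ => 0) Z s₀ ε N₀ ≤ ENNReal.ofReal (Real.exp (-(n₀:ℝ))) * C' := by
    intro n₀ hn₀
    have hcard : Fintype.card (Fin n₀ → {a // a ∈ t}) = m ^ n₀ := by
      rw [Fintype.card_fun, Fintype.card_coe, Fintype.card_fin]
    set M : ℕ := m ^ n₀ with hMcard
    set eqv : (Fin n₀ → {a // a ∈ t}) ≃ Fin M := Fintype.equivFinOfCardEq hcard with heqv
    set code : X → (Fin n₀ → {a // a ∈ t}) := fun y i => ⟨σ (T^[(i:ℕ)] y), hσt _⟩ with hcode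
    set c : ℕ → X := fun k =>
      if h : ∃ y : X, ((eqv (code y) : ℕ) = k) then h.choose else Classical.arbitrary X
      with hc
    set n : ℕ → ℕ := fun k => if k < M then n₀ else n₀ + k with hn
    have h1 : ∀ k, N₀ ≤ n k := by
      intro k; rw [hn]; dsimp only
      split <;> omega
    have hcov : Z ⊆ ⋃ k, bowenBall T (n k) (c k) ε := by
      intro y _
      set k : ℕ := (eqv (code y) : ℕ) with hk
      have hkM : k < M := (eqv (code y)).2
      have hex : ∃ y' : X, ((eqv (code y') : ℕ) = k) := ⟨y, rfl⟩
      have hck : c k = hex.choose := by rw [hc]; exact dif_pos hex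
      have hcodeeq : code hex.choose = code y := by
        have := hex.choose_spec
        have h2 : eqv (code hex.choose) = eqv (code y) := Fin.ext (by rw [this])
        exact eqv.injective h2
      refine Set.mem_iUnion.mpr ⟨k, ?_⟩
      have hnk : n k = n₀ := by rw [hn]; exact if_pos hkM
      rw [hnk, hck]
      intro i hi
      have hσeq : σ (T^[i] hex.choose) = σ (T^[i] y) := by
        have := congrFun hcodeeq ⟨i, hi⟩
        exact Subtype.ext_iff.mp this
      calc dist (T^[i] hex.choose) (T^[i] y)
          ≤ dist (T^[i] hex.choose) (σ (T^[i] y)) + dist (σ (T^[i] y)) (T^[i] y) :=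
            dist_triangle _ _ _
        _ < ε/2 + ε/2 := by
            refine add_lt_add ?_ (hσd _)
            rw [← hσeq, dist_comm]; exact hσd _
        _ = ε := by ring
    -- apply inf bound
    have hle : ppM T (fun _ => 0) Z s₀ ε N₀ ≤
        ∑' k, ENNReal.ofReal (Real.exp (-s₀ * (n k) +
          sSup ((fun y => birkhoffSum T (fun _ => (0:ℝ)) (n k) y) '' bowenBall T (n k) (c k) ε))) := by
      rw [ppM]
      exact iInf_le_of_le c (iInf_le_of_le n (iInf_le_of_le h1 (iInf_le _ hcov)))
    refine hle.trans ?_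
    set a : ℝ≥0∞ := ENNReal.ofReal (Real.exp (-s₀ * (n₀:ℝ))) with ha
    have hrw : ∀ k, ENNReal.ofReal (Real.exp (-s₀ * (n k) +
          sSup ((fun y => birkhoffSum T (fun _ => (0:ℝ)) (n k) y) '' bowenBall T (n k) (c k) ε)))
        = ENNReal.ofReal (Real.exp (-s₀ * (n k))) := by
      intro k; rw [sSup_birkhoff_zero', add_zero]
    have han : a ≤ ENNReal.ofReal (Real.exp (-(n₀:ℝ))) := by
      apply ENNReal.ofReal_le_ofReal
      apply Real.exp_le_exp.mpr
      have : (n₀:ℝ) ≤ s₀ * n₀ := le_mul_of_one_le_left (Nat.cast_nonneg _) hs₀1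
      linarith
    calc ∑' k, ENNReal.ofReal (Real.exp (-s₀ * (n k) +
          sSup ((fun y => birkhoffSum T (fun _ => (0:ℝ)) (n k) y) '' bowenBall T (n k) (c k) ε)))
        = ∑' k, ENNReal.ofReal (Real.exp (-s₀ * (n k))) := tsum_congr hrw
      _ ≤ ∑' k, ((if k < M then a else 0) + a * r ^ k) := by
          apply ENNReal.tsum_le_tsum
          intro k
          by_cases hk : k < M
          · have hnk : n k = n₀ := by rw [hn]; exact if_pos hk
            rw [hnk, if_pos hk]
            exact le_add_of_le_of_nonneg le_rfl zero_le
          · have hnk : n k = n₀ + k := by rw [hn]; exact if_neg hk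
            rw [hnk, if_neg hk, zero_add]
            apply le_of_eq
            have hre : Real.exp (-s₀ * ((n₀ + k : ℕ):ℝ))
                = Real.exp (-s₀ * n₀) * Real.exp (-s₀) ^ k := by
              rw [← Real.exp_nat_mul, ← Real.exp_add]
              congr 1; push_cast; ring
            rw [hre, ENNReal.ofReal_mul (Real.exp_nonneg _), ha, hr,
              ENNReal.ofReal_pow (Real.exp_nonneg _)]
      _ = (∑' k, (if k < M then a else 0)) + a * ∑' k : ℕ, r ^ k := by
          rw [ENNReal.tsum_add, ENNReal.tsum_mul_left]
      _ = (M : ℝ≥0∞) * a + a * (1 - r)⁻¹ := by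
          rw [ENNReal.tsum_geometric]
          congr 1
          rw [tsum_eq_sum (s := Finset.range M)
            (by intro k hk; rw [if_neg (by simpa using hk)])]
          rw [Finset.sum_congr rfl (fun k hk => if_pos (Finset.mem_range.mp hk)),
            Finset.sum_const, Finset.card_range, nsmul_eq_mul]
      _ ≤ ENNReal.ofReal (Real.exp (-(n₀:ℝ))) + ENNReal.ofReal (Real.exp (-(n₀:ℝ))) * (1 - r)⁻¹ := by
          gcongr
          -- (M : ℝ≥0∞) * a ≤ ofReal (exp (-n₀)) : in fact equality
          apply le_of_eq
          rw [ha, ← ENNReal.ofReal_natCast M, ← ENNReal.ofReal_mul (Nat.cast_nonneg M)]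
          congr 1
          have hmpos : (0:ℝ) < (m:ℝ) := by exact_mod_cast hm1
          have hMr : (M:ℝ) = Real.exp (Real.log m) ^ n₀ := by
            rw [Real.exp_log hmpos, hMcard]; push_cast; ring
          rw [hMr, ← Real.exp_nat_mul, ← Real.exp_add]
          congr 1
          rw [hs₀]; ring
      _ = ENNReal.ofReal (Real.exp (-(n₀:ℝ))) * C' := by
          rw [hC', mul_add, mul_one]
  -- conclude ppM = 0
  have htend : Tendsto (fun n₀ : ℕ => ENNReal.ofReal (Real.exp (-(n₀:ℝ))) * C') atTop (𝓝 0) := by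
    have h0 : Tendsto (fun n₀ : ℕ => Real.exp (-(n₀:ℝ))) atTop (𝓝 0) :=
      Real.tendsto_exp_neg_atTop_nhds_zero.comp tendsto_natCast_atTop_atTop
    have h1 : Tendsto (fun n₀ : ℕ => ENNReal.ofReal (Real.exp (-(n₀:ℝ)))) atTop (𝓝 0) := by
      simpa using (ENNReal.tendsto_ofReal (a := 0) h0)
    simpa using ENNReal.Tendsto.mul_const h1 (Or.inr hC't)
  have hfin : ppM T (fun _ => 0) Z s₀ ε N₀ ≤ 0 :=
    ge_of_tendsto htend (Filter.eventually_atTop.mpr ⟨N₀, hbd⟩)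
  exact le_antisymm hfin zero_le

/-- **Entropy Distribution Principle.** If `ν` is a weak-* limit of Borel probability
measures `μ k` satisfying `limsup_k μ_k(B_n(x, ε)) ≤ K exp(-s n)` for every Bowen ball of
order `n ≥ N` meeting `Z`, and `ν Z > 0`, then `h_top^B(Z, ε) ≥ s`. -/
theorem entropy_distribution_principle [MetricSpace X] [CompactSpace X]
    [MeasurableSpace X] [BorelSpace X]
    (T : X → X) (hT : Continuous T) (Z : Set X)
    (μ : ℕ → ProbabilityMeasure X) (ν : ProbabilityMeasure X)
    (hconv : Filter.Tendsto μ Filter.atTop (𝓝 ν))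
    (ε : ℝ) (hε : 0 < ε) (s : ℝ) (hs : 0 ≤ s) (K : ℝ) (hK : 0 < K) (N : ℕ)
    (hbound : ∀ x : X, ∀ n : ℕ, N ≤ n → (bowenBall T n x ε ∩ Z).Nonempty →
      Filter.atTop.limsup (fun k : ℕ => (μ k : Measure X) (bowenBall T n x ε)) ≤
        ENNReal.ofReal (K * Real.exp (-s * n)))
    (hν : 0 < (ν : Measure X) Z) :
    s ≤ bowenEntropyAt T Z ε := by
    classical
  have hZne : Z.Nonempty := MeasureTheory.nonempty_of_measure_ne_zero hν.ne'
  have hXne : Nonempty X := ⟨hZne.choose⟩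
  -- the defining set is nonempty
  obtain ⟨s₀, hs₀⟩ := exists_ppMLim_zero (T := T) Z hε
  have hne : {s' : ℝ | ppMLim T (fun _ => 0) Z s' ε = 0}.Nonempty := ⟨s₀, hs₀⟩
  rw [bowenEntropyAt, ppPressureAt]
  refine le_csInf hne ?_
  intro s' hs'
  by_contra hlt
  push_neg at hlt
  -- hlt : s' < s
  have hppM : ppM T (fun _ => 0) Z s' ε N = 0 :=
    (ENNReal.iSup_eq_zero.mp hs') N
  set C : ℝ≥0∞ := ENNReal.ofReal (K * Real.exp (-(s - s') * N)) with hC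
  have hC0 : C ≠ 0 := by
    rw [hC]
    simp only [ne_eq, ENNReal.ofReal_eq_zero, not_le]
    positivity
  have hCt : C ≠ ⊤ := ENNReal.ofReal_ne_top
  set η : ℝ≥0∞ := (ν : Measure X) Z / C with hη
  have hηpos : 0 < η := ENNReal.div_pos hν.ne' hCt
  have hlt2 : ppM T (fun _ => 0) Z s' ε N < η := by rw [hppM]; exact hηpos
  rw [ppM] at hlt2
  simp only [iInf_lt_iff] at hlt2
  obtain ⟨c, n, h1, h2, hsum⟩ := hlt2
  -- main estimate
  have key : (ν : Measure X) Z ≤ C *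
      ∑' i, ENNReal.ofReal (Real.exp (-s' * (n i) +
        sSup ((fun y => birkhoffSum T (fun _ => (0:ℝ)) (n i) y) '' bowenBall T (n i) (c i) ε))) := by
    have hterm : ∀ i, (ν : Measure X) (Z ∩ bowenBall T (n i) (c i) ε) ≤
        C * ENNReal.ofReal (Real.exp (-s' * (n i))) := by
      intro i
      by_cases hmeet : (bowenBall T (n i) (c i) ε ∩ Z).Nonempty
      · have hop : (ν : Measure X) (bowenBall T (n i) (c i) ε) ≤
            Filter.atTop.limsup (fun k : ℕ => (μ k : Measure X) (bowenBall T (n i) (c i) ε)) :=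
          le_trans (ProbabilityMeasure.le_liminf_measure_open_of_tendsto hconv
            (isOpen_bowenBall' hT _ _ _)) liminf_le_limsup
        have hKb := hbound (c i) (n i) (h1 i) hmeet
        have hre : ENNReal.ofReal (K * Real.exp (-s * (n i))) ≤
            C * ENNReal.ofReal (Real.exp (-s' * (n i))) := by
          rw [hC, ← ENNReal.ofReal_mul (by positivity)]
          apply ENNReal.ofReal_le_ofReal
          rw [mul_assoc, ← Real.exp_add]
          apply mul_le_mul_of_nonneg_left _ hK.le
          apply Real.exp_le_exp.mpr
          have hN : (N:ℝ) ≤ (n i : ℝ) := by exact_mod_cast h1 i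
          nlinarith [sub_pos.mpr hlt]
        calc (ν : Measure X) (Z ∩ bowenBall T (n i) (c i) ε)
            ≤ (ν : Measure X) (bowenBall T (n i) (c i) ε) := measure_mono inter_subset_right
          _ ≤ _ := le_trans (le_trans hop hKb) hre
      · have : Z ∩ bowenBall T (n i) (c i) ε = ∅ := by
          rw [Set.inter_comm]; exact Set.not_nonempty_iff_eq_empty.mp hmeet
        rw [this]; simp
    calc (ν : Measure X) Z ≤ (ν : Measure X) (⋃ i, Z ∩ bowenBall T (n i) (c i) ε) := by
          apply measure_mono
          intro y hy
          obtain ⟨i, hi⟩ := Set.mem_iUnion.mp (h2 hy)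
          exact Set.mem_iUnion.mpr ⟨i, hy, hi⟩
      _ ≤ ∑' i, (ν : Measure X) (Z ∩ bowenBall T (n i) (c i) ε) := measure_iUnion_le _
      _ ≤ ∑' i, C * ENNReal.ofReal (Real.exp (-s' * (n i))) := ENNReal.tsum_le_tsum hterm
      _ = C * ∑' i, ENNReal.ofReal (Real.exp (-s' * (n i))) := ENNReal.tsum_mul_left
      _ = _ := by
          congr 1
          refine tsum_congr fun i => ?_
          rw [sSup_birkhoff_zero', add_zero]
  have hfinal : (ν : Measure X) Z < (ν : Measure X) Z := by
    calc (ν : Measure X) Z ≤ C * _ := key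
      _ < C * η := by
          exact (ENNReal.mul_lt_mul_iff_right hC0 hCt).mpr hsum
      _ = (ν : Measure X) Z := by
          rw [hη, mul_comm]
          exact ENNReal.div_mul_cancel hC0 hCt
  exact lt_irrefl _ hfinal
end

section
/- Let T : X → X be continuous and f : X → ℝ positive continuous. If E is an (n,η)-spanning set for X and P = P(−s(f+1)) < 0 with n large enough that Σ_{x∈E} exp(−s·inf_{y∈B_n(x,η)} S_n(f+1)(y)) ≤ e^{nP/2}, and sη < −P/4, then Σ_{n≥N} Σ_{x∈E_n} exp(−s(n + ⌊inf_{y∈B_n(x,η)} S_n f(y) − nη⌋)) converges. -/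
open Filter Topology MeasureTheory Set
open scoped ENNReal NNReal

variable {X : Type*}

/-- **Summability in the upper bound estimate.** Suppose `P = P(-s(f+1)) < 0`, `s > 0`,
`η > 0` with `s η < -P/4`, and for every `n ≥ N` the `(n, η)`-spanning set `E n` of `X`
satisfies `Σ_{x ∈ E n} exp(-s inf_{y ∈ B_n(x,η)} S_n(f+1)(y)) ≤ e^{nP/2}`. Then
`Σ_{n ≥ N} Σ_{x ∈ E n} exp(-s (n + ⌊inf_{y ∈ B_n(x,η)} S_n f(y) − n η⌋))` converges. -/
theorem upper_bound_summable [MetricSpace X] [CompactSpace X]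
    (T : X → X) (hT : Continuous T) (f : X → ℝ) (hf : Continuous f)
    (hfpos : ∀ x, 0 < f x) (s η P : ℝ) (hs : 0 < s) (hη : 0 < η)
    (hP : P = classPressure T (fun x => -s * (f x + 1))) (hPneg : P < 0)
    (hsη : s * η < -P / 4) (N : ℕ) (E : ℕ → Finset X)
    (hE : ∀ n, N ≤ n → IsSpanningSet T n η (E n) Set.univ ∧
      ∑ x ∈ E n, Real.exp (-s *
          sInf ((fun y => birkhoffSum T (fun z => f z + 1) n y) '' bowenBall T n x η)) ≤
        Real.exp (n * P / 2)) :
    Summable (fun j : ℕ => ∑ x ∈ E (j + N), Real.exp (-s * ((j + N : ℕ) +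
      (⌊sInf ((fun y => birkhoffSum T f (j + N) y) '' bowenBall T (j + N) x η) -
        (j + N : ℕ) * η⌋ : ℤ)))) := by
  set r : ℝ := s * η + P / 2 with hr
  have hrneg : r < 0 := by rw [hr]; nlinarith
  have key : ∀ j : ℕ, ∑ x ∈ E (j + N), Real.exp (-s * ((j + N : ℕ) +
      (⌊sInf ((fun y => birkhoffSum T f (j + N) y) '' bowenBall T (j + N) x η) -
        (j + N : ℕ) * η⌋ : ℤ))) ≤ Real.exp s * Real.exp ((j + N : ℕ) * r) := by
    intro j
    set n := j + N with hn
    obtain ⟨hspan, hsum⟩ := hE n (by omega)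
    have hterm : ∀ x ∈ E n, Real.exp (-s * ((n : ℕ) +
        (⌊sInf ((fun y => birkhoffSum T f n y) '' bowenBall T n x η) - (n : ℕ) * η⌋ : ℤ))) ≤
        Real.exp (s + s * (n : ℕ) * η) * Real.exp (-s *
          sInf ((fun y => birkhoffSum T (fun z => f z + 1) n y) '' bowenBall T n x η)) := by
      intro x hx
      set A := sInf ((fun y => birkhoffSum T f n y) '' bowenBall T n x η) with hA
      set I := sInf ((fun y => birkhoffSum T (fun z => f z + 1) n y) '' bowenBall T n x η) with hI
      have hne : (bowenBall T n x η).Nonempty := ⟨x, fun i _ => by simp [hη]⟩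
      have hbdd : BddBelow ((fun y => birkhoffSum T (fun z => f z + 1) n y) '' bowenBall T n x η) := by
        refine ⟨0, fun v hv => ?_⟩
        obtain ⟨y, -, rfl⟩ := hv
        exact Finset.sum_nonneg fun i _ => by dsimp only; have := hfpos (T^[i] y); linarith
      have hshift : ∀ y, birkhoffSum T (fun z => f z + 1) n y = birkhoffSum T f n y + n := by
        intro y
        simp [birkhoffSum, Finset.sum_add_distrib]
      have hIle : I ≤ (n : ℝ) + A := by
        have : ∀ y ∈ bowenBall T n x η, I - n ≤ birkhoffSum T f n y := by
          intro y hy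
          have := csInf_le hbdd (Set.mem_image_of_mem _ hy)
          rw [hshift y] at this
          linarith
        have := le_csInf (hne.image _) (by rintro v ⟨y, hy, rfl⟩; exact this y hy)
        linarith [this]
      have hfloor : A - (n : ℝ) * η - 1 ≤ (⌊A - (n : ℝ) * η⌋ : ℤ) := by
        have := Int.sub_one_lt_floor (A - (n : ℝ) * η)
        push_cast
        linarith
      rw [← Real.exp_add]
      apply Real.exp_le_exp.mpr
      nlinarith [hs.le]
    calc ∑ x ∈ E n, Real.exp (-s * ((n : ℕ) +
          (⌊sInf ((fun y => birkhoffSum T f n y) '' bowenBall T n x η) - (n : ℕ) * η⌋ : ℤ)))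
        ≤ ∑ x ∈ E n, Real.exp (s + s * (n : ℕ) * η) * Real.exp (-s *
            sInf ((fun y => birkhoffSum T (fun z => f z + 1) n y) '' bowenBall T n x η)) :=
          Finset.sum_le_sum hterm
      _ = Real.exp (s + s * (n : ℕ) * η) * ∑ x ∈ E n, Real.exp (-s *
            sInf ((fun y => birkhoffSum T (fun z => f z + 1) n y) '' bowenBall T n x η)) :=
          (Finset.mul_sum _ _ _).symm
      _ ≤ Real.exp (s + s * (n : ℕ) * η) * Real.exp ((n : ℕ) * P / 2) :=
          mul_le_mul_of_nonneg_left hsum (Real.exp_pos _).le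
      _ = Real.exp s * Real.exp ((n : ℕ) * r) := by
          rw [← Real.exp_add, ← Real.exp_add, hr]; ring_nf
  have hsummable : Summable (fun j : ℕ => Real.exp s * Real.exp ((j + N : ℕ) * r)) := by
    have hgeo : Summable (fun j : ℕ => (Real.exp s * Real.exp ((N : ℝ) * r)) * Real.exp r ^ j) :=
      (summable_geometric_of_lt_one (Real.exp_pos r).le
        (Real.exp_lt_one_iff.mpr hrneg)).mul_left _
    refine hgeo.congr fun j => ?_
    rw [← Real.exp_nat_mul, mul_assoc, ← Real.exp_add]
    congr 1
    push_cast
    ring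
  exact Summable.of_nonneg_of_le
    (fun j => Finset.sum_nonneg fun x _ => (Real.exp_pos _).le) key hsummable
end
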